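/- arXiv:2204.00181 — 5 statements merged into one kernel-verified Lean document; each statement's English description precedes it below -/
import Mathlib

section
/- Let F = ∪_{i=1}^k S_{d_i} be a star forest with k ≥ 2 and d_1 ≥ ⋯ ≥ d_k ≥ 1, where S_d denotes the star with d edges. If G is an F-free graph of order n ≥ Σ_{i=1}^k d_i + k, then e(G) ≤ (1/2)(Σ_{i=1}^k d_i + 2k - 3)·n - (1/2)(k-1)(Σ_{i=1}^k d_i + k - 1). -/
open SimpleGraph

attribute [local instance] Classical.propDecidable

/-- The star forest `⋃ i, S_(d i)`; in component `i` the vertex `0` is the center. -/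
def starForest (k : ℕ) (d : Fin k → ℕ) : SimpleGraph (Σ i : Fin k, Fin (d i + 1)) where
  Adj x y := x.1 = y.1 ∧ x ≠ y ∧ ((x.2 : ℕ) = 0 ∨ (y.2 : ℕ) = 0)
  symm := by constructor; rintro x y ⟨h1, h2, h3⟩; exact ⟨h1.symm, h2.symm, h3.symm⟩
  loopless := by constructor; rintro x ⟨_, h, _⟩; exact h rfl

/-- `G` contains a copy of `F` as a subgraph. -/
def Contains {V W : Type*} (G : SimpleGraph V) (F : SimpleGraph W) : Prop :=
  ∃ f : W ↪ V, ∀ ⦃a b⦄, F.Adj a b → G.Adj (f a) (f b)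

theorem stmt5 (k n : ℕ) (hk : 2 ≤ k) (d : Fin k → ℕ)
    (hmono : ∀ i j : Fin k, i ≤ j → d j ≤ d i) (hd : ∀ i, 1 ≤ d i)
    (hn : ∑ i, d i + k ≤ n)
    (G : SimpleGraph (Fin n)) (hfree : ¬ Contains G (starForest k d)) :
    (G.edgeFinset.card : ℝ) ≤
      (1 / 2) * ((∑ i, (d i : ℝ)) + 2 * k - 3) * n
        - (1 / 2) * ((k : ℝ) - 1) * ((∑ i, (d i : ℝ)) + k - 1) := by
  classical
  set D := ∑ i, d i with hD
  have hkD : k ≤ D := by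
    calc k = ∑ _i : Fin k, 1 := by simp
    _ ≤ D := Finset.sum_le_sum (fun i _ => hd i)
  -- The set of vertices of large degree
  set A : Finset (Fin n) := Finset.univ.filter (fun w => D + k - 1 ≤ G.degree w) with hA
  have hAcard : A.card ≤ k - 1 := by
    by_contra hlt
    push_neg at hlt
    have hk' : k ≤ A.card := by omega
    obtain ⟨B, hBA, hBcard⟩ := Finset.exists_subset_card_eq hk'
    set v : Fin k ↪o Fin n := B.orderEmbOfFin hBcard with hv
    have hdegv : ∀ i : Fin k, D + k - 1 ≤ G.degree (v i) := by
      intro i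
      have : v i ∈ A := hBA (B.orderEmbOfFin_mem hBcard i)
      simpa [hA] using (Finset.mem_filter.mp this).2
    set S : Finset (Fin n) := Finset.univ.image (fun i => v i) with hS
    set t : (Σ i : Fin k, Fin (d i)) → Finset (Fin n) :=
      fun x => G.neighborFinset (v x.1) \ S with ht
    have htcard : ∀ x, D ≤ (t x).card := by
      intro x
      have hx1 : t x = G.neighborFinset (v x.1) \ (S.erase (v x.1)) := by
        ext w
        simp only [ht, Finset.mem_sdiff, Finset.mem_erase]
        constructor
        · rintro ⟨hw1, hw2⟩; exact ⟨hw1, fun h => hw2 h.2⟩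
        · rintro ⟨hw1, hw2⟩
          refine ⟨hw1, fun hwS => ?_⟩
          have hne : w ≠ v x.1 := by
            rintro rfl
            exact G.notMem_neighborFinset_self _ hw1
          exact hw2 ⟨hne, hwS⟩
      have hecard : (S.erase (v x.1)).card ≤ k - 1 := by
        have h1 : v x.1 ∈ S := Finset.mem_image_of_mem _ (Finset.mem_univ _)
        have h2 : S.card ≤ k := by
          calc S.card ≤ (Finset.univ : Finset (Fin k)).card := Finset.card_image_le
          _ = k := by simp
        rw [Finset.card_erase_of_mem h1]; omega
      have h3 := Finset.le_card_sdiff (S.erase (v x.1)) (G.neighborFinset (v x.1))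
      rw [← hx1] at h3
      have h4 : G.degree (v x.1) = (G.neighborFinset (v x.1)).card := rfl
      have h5 := hdegv x.1
      omega
    have hall : ∀ s : Finset (Σ i : Fin k, Fin (d i)), s.card ≤ (s.biUnion t).card := by
      intro s
      rcases s.eq_empty_or_nonempty with rfl | ⟨x, hx⟩
      · simp
      · have h1 : s.card ≤ D := by
          calc s.card ≤ Fintype.card (Σ i : Fin k, Fin (d i)) := Finset.card_le_univ s
          _ = D := by simp [Fintype.card_sigma, hD]
        calc s.card ≤ D := h1
        _ ≤ (t x).card := htcard x
        _ ≤ (s.biUnion t).card := Finset.card_le_card (Finset.subset_biUnion_of_mem t hx)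
    obtain ⟨g, ginj, gmem⟩ := (Finset.all_card_le_biUnion_card_iff_exists_injective t).mp hall
    have gmemN : ∀ x, g x ∈ G.neighborFinset (v x.1) := fun x => (Finset.mem_sdiff.mp (gmem x)).1
    have gnS : ∀ x, g x ∉ S := fun x => (Finset.mem_sdiff.mp (gmem x)).2
    -- the embedding of the star forest
    set f : (Σ i : Fin k, Fin (d i + 1)) → Fin n := fun x =>
      if h : (x.2 : ℕ) = 0 then v x.1
      else g ⟨x.1, ⟨(x.2 : ℕ) - 1, by have := x.2.isLt; omega⟩⟩ with hf
    have hvS : ∀ i, v i ∈ S := fun i => Finset.mem_image_of_mem _ (Finset.mem_univ _)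
    have hinj : Function.Injective f := by
      rintro ⟨i, a⟩ ⟨j, b⟩ hxy
      by_cases ha : (a : ℕ) = 0 <;> by_cases hb : (b : ℕ) = 0 <;>
        simp only [hf, ha, hb, dif_pos, dif_neg, not_false_iff] at hxy
      · have hij : i = j := v.injective hxy
        subst hij
        have : a = b := Fin.ext (by omega)
        rw [this]
      · exact absurd (hxy ▸ hvS i) (gnS _)
      · exact absurd (hxy.symm ▸ hvS j) (gnS _)
      · have h1 := ginj hxy
        have hij : i = j := congrArg Sigma.fst h1
        subst hij
        have h2 : (⟨(a : ℕ) - 1, by have := a.isLt; omega⟩ : Fin (d i))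
            = ⟨(b : ℕ) - 1, by have := b.isLt; omega⟩ := by
          simpa using h1
        have h3 : (a : ℕ) - 1 = (b : ℕ) - 1 := congrArg Fin.val h2
        have : a = b := Fin.ext (by omega)
        rw [this]
    have hadj : ∀ ⦃x y⦄, (starForest k d).Adj x y → G.Adj (f x) (f y) := by
      rintro ⟨i, a⟩ ⟨j, b⟩ ⟨h1, h2, h3⟩
      simp only at h1
      subst h1
      have hab : a ≠ b := by rintro rfl; exact h2 rfl
      by_cases ha : (a : ℕ) = 0
      · have hb : (b : ℕ) ≠ 0 := fun hb => hab (Fin.ext (by omega))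
        simp only [hf, ha, hb, dif_pos, dif_neg, not_false_iff]
        exact (SimpleGraph.mem_neighborFinset _ _ _).mp (gmemN ⟨i, _⟩)
      · have hb : (b : ℕ) = 0 := by tauto
        simp only [hf, ha, hb, dif_pos, dif_neg, not_false_iff]
        exact ((SimpleGraph.mem_neighborFinset _ _ _).mp (gmemN ⟨i, _⟩)).symm
    exact hfree ⟨⟨f, hinj⟩, hadj⟩
  -- degree sum bound
  have hn1 : 1 ≤ n := by omega
  have hdegsum : ∑ w : Fin n, G.degree w = 2 * G.edgeFinset.card :=
    G.sum_degrees_eq_twice_card_edges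
  have hsplit : 2 * G.edgeFinset.card ≤ A.card * (n - 1) + (n - A.card) * (D + k - 2) := by
    rw [← hdegsum]
    have h1 : ∀ w ∈ A, G.degree w ≤ n - 1 := by
      intro w _
      have := G.degree_lt_card_verts w
      simp only [Fintype.card_fin] at this
      omega
    have h2 : ∀ w ∈ Finset.univ.filter (fun w => ¬ (D + k - 1 ≤ G.degree w)),
        G.degree w ≤ D + k - 2 := by
      intro w hw
      have := (Finset.mem_filter.mp hw).2
      omega
    have hcards : A.card + (Finset.univ.filter (fun w => ¬ (D + k - 1 ≤ G.degree w))).card = n := by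
      rw [hA]
      rw [Finset.card_filter_add_card_filter_not]
      simp
    calc ∑ w : Fin n, G.degree w
        = ∑ w ∈ A, G.degree w
          + ∑ w ∈ Finset.univ.filter (fun w => ¬ (D + k - 1 ≤ G.degree w)), G.degree w := by
          rw [hA]; exact (Finset.sum_filter_add_sum_filter_not _ _ _).symm
      _ ≤ A.card * (n - 1) + (Finset.univ.filter (fun w => ¬ (D + k - 1 ≤ G.degree w))).card
            * (D + k - 2) := by
          have b1 : ∑ w ∈ A, G.degree w ≤ A.card * (n - 1) := by
            simpa [smul_eq_mul] using Finset.sum_le_card_nsmul A _ (n - 1) h1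
          have b2 : ∑ w ∈ Finset.univ.filter (fun w => ¬ (D + k - 1 ≤ G.degree w)), G.degree w
              ≤ (Finset.univ.filter (fun w => ¬ (D + k - 1 ≤ G.degree w))).card * (D + k - 2) := by
            simpa [smul_eq_mul] using
              Finset.sum_le_card_nsmul (Finset.univ.filter (fun w => ¬ (D + k - 1 ≤ G.degree w)))
                _ (D + k - 2) h2
          exact Nat.add_le_add b1 b2
      _ = A.card * (n - 1) + (n - A.card) * (D + k - 2) := by
          congr 1
          congr 1
          omega
  -- convert to reals
  have hAn : A.card ≤ n := by
    calc A.card ≤ (Finset.univ : Finset (Fin n)).card := Finset.card_le_univ A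
    _ = n := by simp
  have hDR : (∑ i, (d i : ℝ)) = (D : ℝ) := by rw [hD]; push_cast; ring
  rw [hDR]
  have hsplitR : 2 * (G.edgeFinset.card : ℝ)
      ≤ (A.card : ℝ) * ((n : ℝ) - 1) + ((n : ℝ) - A.card) * ((D : ℝ) + k - 2) := by
    have := hsplit
    have hcast : ((2 * G.edgeFinset.card : ℕ) : ℝ)
        ≤ ((A.card * (n - 1) + (n - A.card) * (D + k - 2) : ℕ) : ℝ) := by exact_mod_cast this
    push_cast [Nat.cast_sub hn1, Nat.cast_sub hAn, Nat.cast_sub (show 2 ≤ D + k by omega)] at hcast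
    linarith
  have haR : (A.card : ℝ) ≤ (k : ℝ) - 1 := by
    have : (A.card : ℝ) ≤ ((k - 1 : ℕ) : ℝ) := by exact_mod_cast hAcard
    rw [Nat.cast_sub (by omega : 1 ≤ k)] at this
    push_cast at this
    linarith
  have hnR : (D : ℝ) + k ≤ n := by exact_mod_cast hn
  have hkR : (2 : ℝ) ≤ k := by exact_mod_cast hk
  have hkDR : (k : ℝ) ≤ D := by exact_mod_cast hkD
  nlinarith [mul_nonneg (sub_nonneg.mpr haR) (by linarith : (0:ℝ) ≤ (n:ℝ) - D - k + 1)]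
end

section
/- Let G be a connected graph, 0 < α < 1, ρ_α = ρ_α(G), and let x = (x_v) be a positive eigenvector of A_α(G) for ρ_α with maximum entry x_w = 1. Then (1-α)·Σ_{uv ∈ E(G)}(x_u + x_v) ≥ ρ_α(ρ_α + 1 - α - α·d(w)) + (1-α)·ρ_α − (1-α)·ρ_α, i.e., Σ_{uv ∈ E(G)}(x_u + x_v) ≥ ρ_α(ρ_α + 1 - α - α·d(w))/(1-α). -/
open SimpleGraph Matrix Finset

attribute [local instance] Classical.propDecidable

noncomputable def Aalpha (α : ℝ) {V : Type*} [Fintype V] [DecidableEq V]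
    (G : SimpleGraph V) [DecidableRel G.Adj] : Matrix V V ℝ :=
  α • Matrix.diagonal (fun v => (G.degree v : ℝ)) + (1 - α) • (G.adjMatrix ℝ)

noncomputable def rhoAlpha (α : ℝ) {V : Type*} [Fintype V] [DecidableEq V]
    (G : SimpleGraph V) [DecidableRel G.Adj] : ℝ :=
  sSup (spectrum ℝ (Aalpha α G))

lemma dart_sum_fst {V : Type*} [Fintype V] [DecidableEq V]
    (G : SimpleGraph V) [DecidableRel G.Adj] (x : V → ℝ) :
    ∑ d : G.Dart, x d.fst = ∑ v, (G.degree v : ℝ) * x v := by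
  rw [← Finset.sum_fiberwise univ (fun d : G.Dart => d.fst) (fun d => x d.fst)]
  refine Finset.sum_congr rfl fun v _ => ?_
  have hcard : #({d : G.Dart | d.fst = v} : Finset _) = G.degree v :=
    G.dart_fst_fiber_card_eq_degree v
  calc ∑ d ∈ ({d : G.Dart | d.fst = v} : Finset _), x d.fst
      = ∑ _d ∈ ({d : G.Dart | d.fst = v} : Finset _), x v :=
        Finset.sum_congr rfl fun d hd => by rw [(Finset.mem_filter.mp hd).2]
    _ = (G.degree v : ℝ) * x v := by rw [Finset.sum_const, hcard, nsmul_eq_mul]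

lemma edge_sum_eq {V : Type*} [Fintype V] [DecidableEq V]
    (G : SimpleGraph V) [DecidableRel G.Adj] (x : V → ℝ) :
    ∑ e ∈ G.edgeFinset, Sym2.lift ⟨fun u v => x u + x v, fun _ _ => by ring⟩ e =
      ∑ v, (G.degree v : ℝ) * x v := by
  rw [← dart_sum_fst,
    ← Finset.sum_fiberwise_of_maps_to (t := G.edgeFinset)
      (g := fun d : G.Dart => d.edge)
      (fun d _ => by rw [mem_edgeFinset]; exact d.edge_mem) (fun d => x d.fst)]
  refine Finset.sum_congr rfl fun e he => ?_
  rw [mem_edgeFinset] at he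
  induction e with
  | _ u v =>
    let d : G.Dart := ⟨(u, v), he⟩
    have hfib : (univ.filter fun d' : G.Dart => d'.edge = s(u, v)) = {d, d.symm} := by
      have := d.edge_fiber
      simpa [d, SimpleGraph.Dart.edge] using this
    rw [Sym2.lift_mk, hfib, Finset.sum_insert (by simpa using d.symm_ne.symm),
      Finset.sum_singleton]
    rfl

lemma neighbor_sum_swap {V : Type*} [Fintype V] [DecidableEq V]
    (G : SimpleGraph V) [DecidableRel G.Adj] (x : V → ℝ) :
    ∑ v, ∑ u ∈ G.neighborFinset v, x u = ∑ v, (G.degree v : ℝ) * x v := by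
  have hNv : ∀ v : V, G.neighborFinset v = univ.filter (G.Adj v) := by
    intro v; ext u; simp
  calc ∑ v, ∑ u ∈ G.neighborFinset v, x u
      = ∑ v, ∑ u, if G.Adj v u then x u else 0 := by
        simp [hNv, Finset.sum_filter]
    _ = ∑ u, ∑ v, if G.Adj v u then x u else 0 := Finset.sum_comm
    _ = ∑ u, (G.degree u : ℝ) * x u := by
        refine Finset.sum_congr rfl fun u _ => ?_
        rw [← Finset.sum_filter, Finset.sum_const, nsmul_eq_mul]
        congr 1
        have : (univ.filter fun v => G.Adj v u) = G.neighborFinset u := by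
          ext v; simp [G.adj_comm]
        rw [this, G.card_neighborFinset_eq_degree]

theorem stmt9 {n : ℕ} (α : ℝ) (hα0 : 0 < α) (hα1 : α < 1)
    (G : SimpleGraph (Fin n)) (hconn : G.Connected)
    (x : Fin n → ℝ) (hpos : ∀ v, 0 < x v)
    (heig : (Aalpha α G) *ᵥ x = rhoAlpha α G • x)
    (w : Fin n) (hw : x w = 1) (hmax : ∀ v, x v ≤ 1) :
    ∑ e ∈ G.edgeFinset, Sym2.lift ⟨fun u v => x u + x v, fun _ _ => by ring⟩ e ≥
      rhoAlpha α G * (rhoAlpha α G + 1 - α - α * G.degree w) / (1 - α) := by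
  set ρ := rhoAlpha α G with hρdef
  have h1α : (0:ℝ) < 1 - α := by linarith
  have heq : ∀ v, α * (G.degree v : ℝ) * x v + (1 - α) * ∑ u ∈ G.neighborFinset v, x u
      = ρ * x v := by
    intro v
    have h := congrFun heig v
    simp only [Aalpha, Matrix.add_mulVec, Matrix.smul_mulVec,
      Matrix.mulVec_diagonal, Pi.add_apply, Pi.smul_apply, smul_eq_mul,
      SimpleGraph.adjMatrix_mulVec_apply] at h
    linarith [h]
  set S := ∑ v, (G.degree v : ℝ) * x v with hS
  set T := ∑ v, x v with hT
  have hsum : S = ρ * T := by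
    have e1 : ∑ v, (α * ((G.degree v : ℝ) * x v) + (1 - α) * ∑ u ∈ G.neighborFinset v, x u)
        = ∑ v, ρ * x v :=
      Finset.sum_congr rfl fun v _ => by rw [← heq v]; ring
    rw [Finset.sum_add_distrib, ← Finset.mul_sum, ← Finset.mul_sum, ← Finset.mul_sum,
      neighbor_sum_swap, ← hS, ← hT] at e1
    linarith
  set N := ∑ u ∈ G.neighborFinset w, x u with hN
  have heqw : α * (G.degree w : ℝ) + (1 - α) * N = ρ := by
    have := heq w
    rw [hw] at this
    linarith [this]
  have hNnonneg : 0 ≤ N := Finset.sum_nonneg fun u _ => (hpos u).le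
  have hρ0 : 0 ≤ ρ := by
    have : (0:ℝ) ≤ α * (G.degree w : ℝ) := by positivity
    nlinarith
  have hTN : N + 1 ≤ T := by
    have hsub : insert w (G.neighborFinset w) ⊆ univ := Finset.subset_univ _
    have := Finset.sum_le_sum_of_subset_of_nonneg hsub
      (fun v _ _ => (hpos v).le) (f := x)
    rw [Finset.sum_insert (G.notMem_neighborFinset_self w), hw] at this
    rw [hT]; linarith
  rw [ge_iff_le, div_le_iff₀ h1α, edge_sum_eq, ← hS, hsum]
  have key : ρ + 1 - α - α * (G.degree w : ℝ) = (1 - α) * (N + 1) := by ring_nf; linarith [heqw]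
  rw [key]
  have : ρ * (N + 1) ≤ ρ * T := mul_le_mul_of_nonneg_left hTN hρ0
  nlinarith
end

section
/- Let t ≥ s ≥ 2, 0 < α < 1, and n - s + 1 = pt for a positive integer p. Then for G = K_{s-1} ∇ (pK_t), the α-index ρ_α(G) equals the largest root of f_α(x) = x² - (αn + s + t - 3)x + (α(n-s+1) + s - 2)(α(s-1) + t - 1) - (1-α)²(s-1)(n-s+1) = 0. -/
open SimpleGraph Matrix

attribute [local instance] Classical.propDecidable

/-- The join `G ∇ H`: every vertex of `G` is joined to every vertex of `H`. -/
def joinGraph {V W : Type*} (G : SimpleGraph V) (H : SimpleGraph W) :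
    SimpleGraph (V ⊕ W) where
  Adj x y :=
    match x, y with
    | Sum.inl a, Sum.inl b => G.Adj a b
    | Sum.inr a, Sum.inr b => H.Adj a b
    | Sum.inl _, Sum.inr _ => True
    | Sum.inr _, Sum.inl _ => True
  symm := ⟨by rintro (a | a) (b | b) h <;> simp_all [SimpleGraph.adj_comm]⟩
  loopless := ⟨by rintro (a | a) h <;> simp_all⟩

/-- `p` disjoint copies of `K_t`. -/
def disjointCopiesComplete (p t : ℕ) : SimpleGraph (Fin p × Fin t) where
  Adj x y := x.1 = y.1 ∧ x.2 ≠ y.2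
  symm := ⟨by rintro x y ⟨h1, h2⟩; exact ⟨h1.symm, h2.symm⟩⟩
  loopless := ⟨by rintro x ⟨_, h⟩; exact h rfl⟩

lemma perron_bound {V : Type*} [Fintype V] [DecidableEq V] [Nonempty V]
    (M : Matrix V V ℝ) (hM : ∀ i j, 0 ≤ M i j) (w : V → ℝ) (hw : ∀ i, 0 < w i)
    (r : ℝ) (heig : M *ᵥ w = r • w) :
    r ∈ spectrum ℝ M ∧ ∀ x ∈ spectrum ℝ M, x ≤ r := by
  constructor
  · rw [spectrum.mem_iff]
    intro hU
    rw [Matrix.isUnit_iff_isUnit_det, isUnit_iff_ne_zero] at hU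
    apply hU
    apply Matrix.exists_mulVec_eq_zero_iff.mp
    refine ⟨w, fun h => (hw (Classical.arbitrary V)).ne' (congrFun h _), ?_⟩
    rw [Algebra.algebraMap_eq_smul_one, Matrix.sub_mulVec, Matrix.smul_mulVec,
      Matrix.one_mulVec, heig, sub_self]
  · intro x hx
    have hdet : (algebraMap ℝ (Matrix V V ℝ) x - M).det = 0 := by
      by_contra h
      exact (spectrum.mem_iff.mp hx)
        ((Matrix.isUnit_iff_isUnit_det _).mpr (isUnit_iff_ne_zero.mpr h))
    obtain ⟨v, hv0, hv⟩ := (Matrix.exists_mulVec_eq_zero_iff).mpr hdet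
    rw [Algebra.algebraMap_eq_smul_one, Matrix.sub_mulVec, Matrix.smul_mulVec,
      Matrix.one_mulVec, sub_eq_zero] at hv
    obtain ⟨i, -, hi⟩ := Finset.exists_max_image Finset.univ (fun j => |v j| / w j)
      ⟨Classical.arbitrary V, Finset.mem_univ _⟩
    set c := |v i| / w i with hc
    have hvw : ∀ j, |v j| ≤ c * w j := by
      intro j
      have h1 : |v j| / w j ≤ c := hi j (Finset.mem_univ j)
      calc |v j| = (|v j| / w j) * w j := (div_mul_cancel₀ _ (hw j).ne').symm
        _ ≤ c * w j := by apply mul_le_mul_of_nonneg_right h1 (hw j).le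
    have hci : c * w i = |v i| := div_mul_cancel₀ _ (hw i).ne'
    have hvi : 0 < |v i| := by
      obtain ⟨j, hj⟩ := Function.ne_iff.mp hv0
      have h1 : 0 < |v j| / w j := div_pos (abs_pos.mpr hj) (hw j)
      have h2 := hi j (Finset.mem_univ j)
      have : 0 < c := lt_of_lt_of_le h1 h2
      rw [← hci]; exact mul_pos this (hw i)
    have hMvi : (M *ᵥ v) i = x * v i := by rw [← hv]; rfl
    have key : |x| * |v i| ≤ r * |v i| := by
      have h2 : |(M *ᵥ v) i| ≤ ∑ j, M i j * |v j| := by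
        refine le_trans (Finset.abs_sum_le_sum_abs _ _) ?_
        apply Finset.sum_le_sum
        intro j _
        rw [abs_mul, abs_of_nonneg (hM i j)]
      have h3 : ∑ j, M i j * |v j| ≤ ∑ j, M i j * (c * w j) := by
        apply Finset.sum_le_sum
        intro j _
        exact mul_le_mul_of_nonneg_left (hvw j) (hM i j)
      have h4 : ∑ j, M i j * (c * w j) = c * (M *ᵥ w) i := by
        rw [Matrix.mulVec, dotProduct, Finset.mul_sum]
        congr 1; funext j; ring
      have h5 : (M *ᵥ w) i = r * w i := by rw [heig]; rfl
      calc |x| * |v i| = |x * v i| := (abs_mul x (v i)).symm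
        _ = |(M *ᵥ v) i| := by rw [hMvi]
        _ ≤ ∑ j, M i j * |v j| := h2
        _ ≤ ∑ j, M i j * (c * w j) := h3
        _ = c * (M *ᵥ w) i := h4
        _ = c * (r * w i) := by rw [h5]
        _ = r * (c * w i) := by ring
        _ = r * |v i| := by rw [hci]
    exact le_trans (le_abs_self x) (le_of_mul_le_mul_right key hvi)

lemma perron_sSup {V : Type*} [Fintype V] [DecidableEq V] [Nonempty V]
    (M : Matrix V V ℝ) (hM : ∀ i j, 0 ≤ M i j) (w : V → ℝ) (hw : ∀ i, 0 < w i)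
    (r : ℝ) (heig : M *ᵥ w = r • w) :
    sSup (spectrum ℝ M) = r := by
  obtain ⟨hmem, hle⟩ := perron_bound M hM w hw r heig
  exact le_antisymm (csSup_le ⟨r, hmem⟩ hle) (le_csSup ⟨r, fun x hx => hle x hx⟩ hmem)

lemma adj_mulVec_elim (s p t : ℕ) (hs : 1 ≤ s) (a b : ℝ)
    (v : Fin (s-1) ⊕ Fin p × Fin t) :
    ((joinGraph (completeGraph (Fin (s - 1))) (disjointCopiesComplete p t)).adjMatrix ℝ *ᵥ
      Sum.elim (fun _ => a) (fun _ => b)) v =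
    Sum.elim (fun _ => (((s:ℝ)-1)-1)*a + ((p:ℝ)*(t:ℝ))*b)
      (fun _ => ((s:ℝ)-1)*a + ((t:ℝ)-1)*b) v := by
  rw [Matrix.mulVec]
  cases v with
  | inl a0 =>
    rw [show ((joinGraph (completeGraph (Fin (s - 1))) (disjointCopiesComplete p t)).adjMatrix ℝ (Sum.inl a0)) ⬝ᵥ _ = ∑ u, _ * Sum.elim (fun _ => a) (fun _ => b) u from rfl]
    rw [Fintype.sum_sum_type]
    have e1 : ∀ b' : Fin (s-1),
        (joinGraph (completeGraph (Fin (s - 1))) (disjointCopiesComplete p t)).adjMatrix ℝ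
          (Sum.inl a0) (Sum.inl b') * (Sum.elim (fun _ => a) (fun _ => b) : Fin (s-1) ⊕ Fin p × Fin t → ℝ) (Sum.inl b')
        = a - (if a0 = b' then a else 0) := by
      intro b'
      simp only [SimpleGraph.adjMatrix_apply, Sum.elim_inl]
      by_cases h : a0 = b'
      · rw [if_pos h, if_neg (by simp [joinGraph, completeGraph, h])]; ring
      · rw [if_neg h, if_pos (by simp [joinGraph, completeGraph, h])]; ring
    have e2 : ∀ x : Fin p × Fin t,
        (joinGraph (completeGraph (Fin (s - 1))) (disjointCopiesComplete p t)).adjMatrix ℝ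
          (Sum.inl a0) (Sum.inr x) * (Sum.elim (fun _ => a) (fun _ => b) : Fin (s-1) ⊕ Fin p × Fin t → ℝ) (Sum.inr x) = b := by
      intro x
      simp only [SimpleGraph.adjMatrix_apply, Sum.elim_inr]
      rw [if_pos (by simp [joinGraph])]; ring
    rw [Finset.sum_congr rfl (fun b' _ => e1 b'), Finset.sum_congr rfl (fun x _ => e2 x),
      Finset.sum_sub_distrib, Finset.sum_ite_eq, Finset.sum_const, Finset.sum_const]
    simp only [Finset.card_univ, Fintype.card_fin, Fintype.card_prod, Finset.mem_univ, if_pos,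
      nsmul_eq_mul, Sum.elim_inl]
    push_cast [Nat.cast_sub hs]
    ring
  | inr x =>
    obtain ⟨i, k⟩ := x
    rw [show ((joinGraph (completeGraph (Fin (s - 1))) (disjointCopiesComplete p t)).adjMatrix ℝ (Sum.inr (i,k))) ⬝ᵥ _ = ∑ u, _ * Sum.elim (fun _ => a) (fun _ => b) u from rfl]
    rw [Fintype.sum_sum_type]
    have e1 : ∀ b' : Fin (s-1),
        (joinGraph (completeGraph (Fin (s - 1))) (disjointCopiesComplete p t)).adjMatrix ℝ
          (Sum.inr (i,k)) (Sum.inl b') * (Sum.elim (fun _ => a) (fun _ => b) : Fin (s-1) ⊕ Fin p × Fin t → ℝ) (Sum.inl b') = a := by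
      intro b'
      simp only [SimpleGraph.adjMatrix_apply, Sum.elim_inl]
      rw [if_pos (by simp [joinGraph])]; ring
    have e2 : ∀ y : Fin p × Fin t,
        (joinGraph (completeGraph (Fin (s - 1))) (disjointCopiesComplete p t)).adjMatrix ℝ
          (Sum.inr (i,k)) (Sum.inr y) * (Sum.elim (fun _ => a) (fun _ => b) : Fin (s-1) ⊕ Fin p × Fin t → ℝ) (Sum.inr y)
        = if i = y.1 then (b - if k = y.2 then b else 0) else 0 := by
      intro y
      simp only [SimpleGraph.adjMatrix_apply, Sum.elim_inr]
      by_cases h1 : i = y.1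
      · by_cases h2 : k = y.2
        · rw [if_neg (by simp [joinGraph, disjointCopiesComplete, h1, h2]), if_pos h1, if_pos h2]
          ring
        · rw [if_pos (by simp [joinGraph, disjointCopiesComplete, h1, h2]), if_pos h1, if_neg h2]
          ring
      · rw [if_neg (by simp [joinGraph, disjointCopiesComplete, h1]), if_neg h1]
        ring
    rw [Finset.sum_congr rfl (fun b' _ => e1 b'), Finset.sum_congr rfl (fun y _ => e2 y),
      Finset.sum_const, Fintype.sum_prod_type]
    have e3 : ∀ j : Fin p, ∑ l : Fin t, (if i = (j,l).1 then (b - if k = (j,l).2 then b else 0) else 0)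
        = if i = j then ((t:ℝ)*b - b) else 0 := by
      intro j
      by_cases h : i = j
      · simp only [if_pos h, Finset.sum_sub_distrib, Finset.sum_const, Finset.sum_ite_eq,
          Finset.mem_univ, if_pos, Finset.card_univ, Fintype.card_fin, nsmul_eq_mul]
      · simp [h]
    rw [Finset.sum_congr rfl (fun j _ => e3 j), Finset.sum_ite_eq]
    simp only [Finset.card_univ, Fintype.card_fin, Finset.mem_univ, if_pos, nsmul_eq_mul,
      Sum.elim_inr]
    push_cast [Nat.cast_sub hs]
    ring

set_option maxHeartbeats 1000000 in
theorem stmt12 (α : ℝ) (s t n p : ℕ) (hα0 : 0 < α) (hα1 : α < 1)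
    (hs : 2 ≤ s) (hst : s ≤ t) (hp : 1 ≤ p) (hn : n - s + 1 = p * t) (hns : s ≤ n) :
    (rhoAlpha α (joinGraph (completeGraph (Fin (s - 1))) (disjointCopiesComplete p t))) ^ 2
        - (α * n + s + t - 3) *
          rhoAlpha α (joinGraph (completeGraph (Fin (s - 1))) (disjointCopiesComplete p t))
        + (α * ((n : ℝ) - s + 1) + s - 2) * (α * ((s : ℝ) - 1) + t - 1)
        - (1 - α) ^ 2 * ((s : ℝ) - 1) * ((n : ℝ) - s + 1) = 0 ∧
    ∀ x : ℝ, x ^ 2 - (α * n + s + t - 3) * x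
        + (α * ((n : ℝ) - s + 1) + s - 2) * (α * ((s : ℝ) - 1) + t - 1)
        - (1 - α) ^ 2 * ((s : ℝ) - 1) * ((n : ℝ) - s + 1) = 0 →
      x ≤ rhoAlpha α (joinGraph (completeGraph (Fin (s - 1))) (disjointCopiesComplete p t)) := by
  have hn' : n = s - 1 + p * t := by
    have ht1 : 1 ≤ t := by omega
    omega
  have hs1 : (1:ℕ) ≤ s := by omega
  have hnR : (n:ℝ) = (s:ℝ) - 1 + (p:ℝ)*(t:ℝ) := by
    have h2 : (n:ℝ) = ((s - 1 + p*t : ℕ) : ℝ) := by exact_mod_cast congrArg (Nat.cast : ℕ → ℝ) hn'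
    rw [h2, Nat.cast_add, Nat.cast_mul, Nat.cast_sub hs1, Nat.cast_one]
  have hsR : (2:ℝ) ≤ (s:ℝ) := by exact_mod_cast hs
  have htR : (2:ℝ) ≤ (t:ℝ) := by exact_mod_cast le_trans hs hst
  have hpR : (1:ℝ) ≤ (p:ℝ) := by exact_mod_cast hp
  have hnR2 : (2:ℝ) ≤ (n:ℝ) := by exact_mod_cast le_trans hs hns
  set G := joinGraph (completeGraph (Fin (s - 1))) (disjointCopiesComplete p t) with hGdef
  haveI : Nonempty (Fin (s-1) ⊕ Fin p × Fin t) := ⟨Sum.inl ⟨0, by omega⟩⟩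
  set d1 : ℝ := α*((n:ℝ)-1) + (1-α)*((s:ℝ)-2) with hd1
  set d2 : ℝ := α*((s:ℝ)+(t:ℝ)-2) + (1-α)*((t:ℝ)-1) with hd2
  set c1 : ℝ := (1-α)*((p:ℝ)*(t:ℝ)) with hc1
  set c2 : ℝ := (1-α)*((s:ℝ)-1) with hc2
  set disc : ℝ := (d1-d2)^2 + 4*(c1*c2) with hdiscdef
  have hc1p : 0 < c1 := by
    rw [hc1]
    exact mul_pos (by linarith) (mul_pos (by linarith) (by linarith))
  have hc2p : 0 < c2 := by rw [hc2]; have : (0:ℝ) < 1 - α := by linarith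
                           nlinarith
  have hdisc : 0 < disc := by rw [hdiscdef]; nlinarith [sq_nonneg (d1-d2)]
  have hsq : Real.sqrt disc ^ 2 = disc := Real.sq_sqrt hdisc.le
  have hsqnn : 0 ≤ Real.sqrt disc := Real.sqrt_nonneg disc
  set r : ℝ := (d1 + d2 + Real.sqrt disc)/2 with hrdef
  have hsqgt : |d1 - d2| < Real.sqrt disc := by
    rw [← Real.sqrt_sq_eq_abs]
    exact Real.sqrt_lt_sqrt (sq_nonneg _) (by rw [hdiscdef]; nlinarith)
  have hb : 0 < r - d1 := by
    have h1 := neg_abs_le (d1 - d2)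
    rw [hrdef]; nlinarith
  have hd1nn : 0 ≤ d1 := by rw [hd1]; nlinarith
  have hr0 : 0 ≤ r := by nlinarith
  have hsq0 : Real.sqrt disc ^ 2 = (d1-d2)^2 + 4*(c1*c2) := by rw [hsq, hdiscdef]
  have hquad : r^2 - (d1+d2)*r + (d1*d2 - c1*c2) = 0 := by
    rw [hrdef]; linear_combination hsq0 / 4
  set w : Fin (s-1) ⊕ Fin p × Fin t → ℝ := Sum.elim (fun _ => c1) (fun _ => r - d1) with hwdef
  have hwpos : ∀ i, 0 < w i := by
    intro i
    cases i with
    | inl a0 => simpa [hwdef] using hc1p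
    | inr x => simpa [hwdef] using hb
  have hadj : ∀ (a b : ℝ) (v : Fin (s-1) ⊕ Fin p × Fin t),
      (G.adjMatrix ℝ *ᵥ Sum.elim (fun _ => a) (fun _ => b)) v =
      Sum.elim (fun _ => (((s:ℝ)-1)-1)*a + ((p:ℝ)*(t:ℝ))*b)
        (fun _ => ((s:ℝ)-1)*a + ((t:ℝ)-1)*b) v := by
    intro a b v
    rw [hGdef]
    exact adj_mulVec_elim s p t hs1 a b v
  have hdeg : ∀ v, ((G.degree v : ℝ)) =
      Sum.elim (fun _ : Fin (s-1) => (((s:ℝ)-1)-1) + (p:ℝ)*(t:ℝ))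
        (fun _ : Fin p × Fin t => ((s:ℝ)-1) + ((t:ℝ)-1)) v := by
    intro v
    have h1 : (G.adjMatrix ℝ *ᵥ (Sum.elim (fun _ => (1:ℝ)) (fun _ => (1:ℝ)))) v
        = ∑ u ∈ G.neighborFinset v, (Sum.elim (fun _ => (1:ℝ)) (fun _ => (1:ℝ))) u :=
      G.adjMatrix_mulVec_apply _ _
    have h2 : ∑ u ∈ G.neighborFinset v, (Sum.elim (fun _ => (1:ℝ)) (fun _ => (1:ℝ))) u
        = (G.degree v : ℝ) := by
      rw [Finset.sum_congr rfl
        (fun u _ => show (Sum.elim (fun _ => (1:ℝ)) (fun _ => (1:ℝ))) u = 1 by cases u <;> rfl)]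
      rw [Finset.sum_const, nsmul_eq_mul, mul_one]
      rfl
    rw [← h2, ← h1, hadj 1 1 v]
    cases v <;> simp
  have hAw : (Aalpha α G) *ᵥ w = r • w := by
    funext v
    have hsplit : ((Aalpha α G) *ᵥ w) v
        = α * ((G.degree v : ℝ) * w v) + (1-α) * ((G.adjMatrix ℝ *ᵥ w) v) := by
      simp [Aalpha, Matrix.add_mulVec, Matrix.smul_mulVec, Matrix.mulVec_diagonal,
        Pi.add_apply, Pi.smul_apply, smul_eq_mul]
    have h3 : (G.adjMatrix ℝ *ᵥ w) v =
        Sum.elim (fun _ => (((s:ℝ)-1)-1)*c1 + ((p:ℝ)*(t:ℝ))*(r - d1))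
          (fun _ => ((s:ℝ)-1)*c1 + ((t:ℝ)-1)*(r - d1)) v := by
      rw [hwdef]; exact hadj c1 (r - d1) v
    rw [hsplit, h3, hdeg v]
    cases v with
    | inl a0 =>
      simp only [hwdef, Sum.elim_inl, Pi.smul_apply, smul_eq_mul]
      linear_combination (-c1) * hd1 + (-(α*c1)) * hnR + (-(r-d1)) * hc1
    | inr x =>
      simp only [hwdef, Sum.elim_inr, Pi.smul_apply, smul_eq_mul]
      linear_combination (-1 : ℝ) * hquad + (-(r-d1)) * hd2 + (-c1) * hc2
  have hMnn : ∀ i j, 0 ≤ Aalpha α G i j := by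
    intro i j
    simp only [Aalpha, Matrix.add_apply, Matrix.smul_apply, smul_eq_mul,
      Matrix.diagonal_apply, SimpleGraph.adjMatrix_apply]
    apply add_nonneg
    · apply mul_nonneg hα0.le
      split_ifs
      · exact Nat.cast_nonneg _
      · exact le_rfl
    · apply mul_nonneg (by linarith)
      split_ifs <;> norm_num
  have hrho : rhoAlpha α G = r := perron_sSup (Aalpha α G) hMnn w hwpos r hAw
  rw [hd1, hd2, hc1, hc2] at hquad
  constructor
  · rw [hrho]
    linear_combination hquad - (1-α)^2*((s:ℝ)-1) * hnR
  · intro x hx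
    have hxq : x^2 - (d1+d2)*x + (d1*d2 - c1*c2) = 0 := by
      rw [hd1, hd2, hc1, hc2]
      linear_combination hx + (1-α)^2*((s:ℝ)-1) * hnR
    have h2x : (2*x - (d1+d2))^2 = disc := by
      rw [hdiscdef]; linear_combination 4*hxq
    rw [hrho]
    nlinarith [h2x, hsq, hsqnn]
end

section
/- Let t ≥ s ≥ 2. The graph K_{s-1} ∇ (pK_t), the join of a complete graph on s-1 vertices with p disjoint copies of K_t, is K_{s,t} minor-free. -/
open SimpleGraph

/-- `H` is a minor of `G`: pairwise disjoint connected (hence nonempty) branch sets,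
one for each vertex of `H`, with an edge of `G` between the branch sets of any two
adjacent vertices of `H`. -/
def IsMinor {W V : Type*} (H : SimpleGraph W) (G : SimpleGraph V) : Prop :=
  ∃ f : W → Set V,
    (Pairwise fun w₁ w₂ => Disjoint (f w₁) (f w₂)) ∧
    (∀ w, (G.induce (f w)).Connected) ∧
    (∀ ⦃w₁ w₂⦄, H.Adj w₁ w₂ → ∃ u ∈ f w₁, ∃ v ∈ f w₂, G.Adj u v)

lemma walk_fix {n p t : ℕ} {S : Set (Fin n ⊕ Fin p × Fin t)}
    (hS : ∀ a, Sum.inl a ∉ S)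
    {u v : S}
    (w : ((joinGraph (completeGraph (Fin n)) (disjointCopiesComplete p t)).induce S).Walk u v) :
    ∀ q j, (u : Fin n ⊕ Fin p × Fin t) = Sum.inr (q, j) →
      ∃ j', (v : Fin n ⊕ Fin p × Fin t) = Sum.inr (q, j') := by
  induction w with
  | nil => exact fun q j h => ⟨j, h⟩
  | @cons a b c h _ ih =>
    intro q j hu
    have hb := b.2
    have hadj : (joinGraph (completeGraph (Fin n)) (disjointCopiesComplete p t)).Adj a.1 b.1 := h
    match hb1 : (b : Fin n ⊕ Fin p × Fin t) with
    | Sum.inl x => exact absurd (hb1 ▸ hb) (hS x)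
    | Sum.inr (q', j') =>
      rw [hu, hb1] at hadj
      obtain ⟨hq, _⟩ := hadj
      subst hq
      exact ih q j' hb1

theorem stmt13 (s t p : ℕ) (hs : 2 ≤ s) (hst : s ≤ t) :
    ¬ IsMinor (completeBipartiteGraph (Fin s) (Fin t))
        (joinGraph (completeGraph (Fin (s - 1))) (disjointCopiesComplete p t)) := by
  classical
  rintro ⟨f, hdisj, hconn, hadj⟩
  set G := joinGraph (completeGraph (Fin (s - 1))) (disjointCopiesComplete p t) with hG
  -- every branch set is nonempty
  have hne : ∀ w, (f w).Nonempty := by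
    intro w
    obtain ⟨⟨x, hx⟩⟩ := (hconn w).nonempty
    exact ⟨x, hx⟩
  -- sets avoiding the apexes are confined to one copy
  have confined : ∀ w, (∀ a, Sum.inl a ∉ f w) →
      ∃ q, ∀ x ∈ f w, ∃ j, x = Sum.inr (q, j) := by
    intro w hw
    obtain ⟨x₀, hx₀⟩ := hne w
    match hx0 : x₀ with
    | Sum.inl a => exact absurd hx₀ (hw a)
    | Sum.inr (q, j) =>
      refine ⟨q, fun x hx => ?_⟩
      obtain ⟨wk⟩ := (hconn w).preconnected ⟨_, hx₀⟩ ⟨x, hx⟩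
      exact walk_fix hw wk q j rfl
  -- generic counting: at most s-1 branch sets can meet the apexes
  have meets_card : ∀ (α : Type) [Fintype α] (g : α → Fin s ⊕ Fin t),
      Function.Injective g → (∀ i, ∃ a, Sum.inl a ∈ f (g i)) →
      Fintype.card α ≤ s - 1 := by
    intro α _ g hginj hgm
    choose c hc using hgm
    have hcinj : Function.Injective c := by
      intro i i' hii
      by_contra hne'
      have hd := hdisj (fun h => hne' (hginj h))
      exact Set.disjoint_left.mp hd (hc i) (hii ▸ hc i')
    simpa using Fintype.card_le_of_injective c hcinj
  -- there is a left branch set avoiding the apexes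
  have hX : ∃ i : Fin s, ∀ a, Sum.inl a ∉ f (Sum.inl i) := by
    by_contra h
    push_neg at h
    have := meets_card (Fin s) Sum.inl (fun _ _ => by simp) (by simpa using h)
    simp at this; omega
  obtain ⟨i₀, hi₀⟩ := hX
  obtain ⟨q₀, hq₀⟩ := confined _ hi₀
  -- case on whether all right branch sets meet the apexes
  by_cases hcase : ∀ j : Fin t, ∃ a, Sum.inl a ∈ f (Sum.inr j)
  · have := meets_card (Fin t) Sum.inr (fun _ _ => by simp) hcase
    simp at this; omega
  push_neg at hcase
  obtain ⟨j₀, hj₀⟩ := hcase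
  obtain ⟨r, hr⟩ := confined _ hj₀
  -- X i₀ and Y j₀ are adjacent, so q₀ = r
  have hedge : ∀ (i : Fin s) (j : Fin t),
      ∃ u ∈ f (Sum.inl i), ∃ v ∈ f (Sum.inr j), G.Adj u v :=
    fun i j => hadj (by simp)
  have hq₀r : q₀ = r := by
    obtain ⟨u, hu, v, hv, huv⟩ := hedge i₀ j₀
    obtain ⟨ju, hju⟩ := hq₀ u hu
    obtain ⟨jv, hjv⟩ := hr v hv
    rw [hju, hjv] at huv
    exact huv.1
  subst hq₀r
  -- every apex-avoiding branch set is confined to copy q₀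
  have key : ∀ w, (∀ a, Sum.inl a ∉ f w) → ∀ x ∈ f w, ∃ j, x = Sum.inr (q₀, j) := by
    intro w hw
    obtain ⟨q', hq'⟩ := confined w hw
    suffices hqq : q' = q₀ by subst hqq; exact hq'
    match w with
    | Sum.inl i =>
      obtain ⟨u, hu, v, hv, huv⟩ := hedge i j₀
      obtain ⟨ju, hju⟩ := hq' u hu
      obtain ⟨jv, hjv⟩ := hr v hv
      rw [hju, hjv] at huv
      exact huv.1
    | Sum.inr j =>
      obtain ⟨u, hu, v, hv, huv⟩ := hedge i₀ j
      obtain ⟨ju, hju⟩ := hq₀ u hu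
      obtain ⟨jv, hjv⟩ := hq' v hv
      rw [hju, hjv] at huv
      exact huv.1.symm
  -- final counting
  let P : Fin s ⊕ Fin t → Prop := fun w => ∃ a, Sum.inl a ∈ f w
  have h1 : Fintype.card {w // P w} ≤ s - 1 :=
    meets_card {w // P w} Subtype.val Subtype.val_injective (fun i => i.2)
  have h2 : Fintype.card {w // ¬ P w} ≤ t := by
    have : ∀ w : {w // ¬ P w}, ∃ j : Fin t, Sum.inr (q₀, j) ∈ f w.1 := by
      intro ⟨w, hw⟩
      have hw' : ∀ a, Sum.inl a ∉ f w := by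
        intro a ha; exact hw ⟨a, ha⟩
      obtain ⟨x, hx⟩ := hne w
      obtain ⟨j, hj⟩ := key w hw' x hx
      exact ⟨j, hj ▸ hx⟩
    choose c hc using this
    have hcinj : Function.Injective c := by
      intro w w' hww
      by_contra hne'
      have hd := hdisj (fun h => hne' (Subtype.ext h))
      exact Set.disjoint_left.mp hd (hc w) (hww ▸ hc w')
    simpa using Fintype.card_le_of_injective c hcinj
  have h3 : Fintype.card {w // ¬ P w} = Fintype.card (Fin s ⊕ Fin t)
      - Fintype.card {w // P w} := Fintype.card_subtype_compl P
  have h5 : Fintype.card (Fin s ⊕ Fin t) = s + t := by simp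
  rw [h5] at h3
  omega
end

section
/- Let r ≥ 3. The graph K_{r-2} ∇ \overline{K}_{n-r+2} (complete split graph: a clique of size r-2 joined to an independent set of size n-r+2) is K_r minor-free. -/
open SimpleGraph

/-- `K_k ∇ K̄_{n-k}` on `Fin n`: the first `k` vertices form a dominating clique. -/
def completeSplit (n k : ℕ) : SimpleGraph (Fin n) where
  Adj u v := u ≠ v ∧ ((u : ℕ) < k ∨ (v : ℕ) < k)
  symm := ⟨by rintro u v ⟨h1, h2⟩; exact ⟨h1.symm, h2.symm⟩⟩
  loopless := ⟨by rintro u ⟨h1, _⟩; exact h1 rfl⟩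

theorem stmt15 (r n : ℕ) (hr : 3 ≤ r) :
    ¬ IsMinor (completeGraph (Fin r)) (completeSplit n (r - 2)) := by
  classical
  rintro ⟨f, hdisj, hconn, hadj⟩
  set k := r - 2 with hk
  have hne : ∀ w, (f w).Nonempty := by
    intro w
    obtain ⟨⟨x, hx⟩⟩ := (hconn w).nonempty
    exact ⟨x, hx⟩
  have key : ∀ w, ∃ x ∈ f w, ((x : ℕ) < k ∨ ∀ y ∈ f w, k ≤ (y : ℕ)) := by
    intro w
    by_cases h : ∃ x ∈ f w, (x : ℕ) < k
    · obtain ⟨x, hx, hxk⟩ := h; exact ⟨x, hx, Or.inl hxk⟩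
    · obtain ⟨x, hx⟩ := hne w
      exact ⟨x, hx, Or.inr fun y hy => le_of_not_gt fun h' => h ⟨y, hy, h'⟩⟩
  choose g hg hg2 using key
  have ginj : Function.Injective g := by
    intro w₁ w₂ h
    by_contra hne'
    exact Set.disjoint_left.mp (hdisj hne') (hg w₁) (h ▸ hg w₂)
  set T : Finset (Fin r) := Finset.univ.filter (fun w => (g w : ℕ) < k) with hT
  have hcardT : T.card ≤ k := by
    have : T.card ≤ (Finset.range k).card := by
      apply Finset.card_le_card_of_injOn (fun w => (g w : ℕ))
      · intro w hw
        simp only [hT, Finset.coe_filter, Finset.mem_coe, Finset.mem_filter, Set.mem_setOf_eq] at hw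
        simpa using hw.2
      · intro a _ b _ hab
        exact ginj (Fin.val_injective hab)
    simpa using this
  have hcompl : 2 ≤ Tᶜ.card := by
    have := Finset.card_compl T
    simp only [Fintype.card_fin] at this
    omega
  obtain ⟨a, ha, b, hb, hab⟩ := Finset.one_lt_card.mp hcompl
  have hga : ∀ y ∈ f a, k ≤ (y : ℕ) := by
    rcases hg2 a with h | h
    · exact absurd h (by simpa [hT] using ha)
    · exact h
  have hgb : ∀ y ∈ f b, k ≤ (y : ℕ) := by
    rcases hg2 b with h | h
    · exact absurd h (by simpa [hT] using hb)
    · exact h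
  obtain ⟨u, hu, v, hv, hadj'⟩ := hadj (show (completeGraph (Fin r)).Adj a b from hab)
  rcases hadj'.2 with h | h
  · exact absurd h (not_lt.mpr (hga u hu))
  · exact absurd h (not_lt.mpr (hgb v hv))
end
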